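/- Let $a_{\inf}, a_{\sup}, b_{\inf}, b_{\sup}, \chi, \mu$ be positive reals with $a_{\inf} \le a_{\sup}$, $b_{\inf} \le b_{\sup}$, and $b_{\inf} > (1 + a_{\sup}/a_{\inf})\chi\mu$. Define sequences $(\underline{M}_n)$, $(\overline{M}_n)$ by $\underline{M}_0 = 0$, $\overline{M}_n = (a_{\sup} - \chi\mu \underline{M}_n)/(b_{\inf} - \chi\mu)$, $\underline{M}_{n+1} = (a_{\inf} - \chi\mu \overline{M}_n)/(b_{\sup} - \chi\mu)$. Then $\underline{M}_n \to \underline{M}$ and $\overline{M}_n \to \overline{M}$ as $n \to \infty$, where $\underline{M} = \frac{(b_{\inf}-\chi\mu)a_{\inf} - \chi\mu a_{\sup}}{(b_{\sup}-\chi\mu)(b_{\inf}-\chi\mu) - (\chi\mu)^2}$ and $\overline{M} = \frac{(b_{\sup}-\chi\mu)a_{\sup} - \chi\mu a_{\inf}}{(b_{\sup}-\chi\mu)(b_{\inf}-\chi\mu) - (\chi\mu)^2}$. -/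

import Mathlib

theorem stmt_1 (ainf asup binf bsup χ μ : ℝ)
    (hainf : 0 < ainf) (hasup : 0 < asup) (hbinf : 0 < binf) (hbsup : 0 < bsup)
    (hχ : 0 < χ) (hμ : 0 < μ)
    (ha : ainf ≤ asup) (hb : binf ≤ bsup)
    (hH2 : binf > (1 + asup / ainf) * χ * μ)
    (Mlo Mhi : ℕ → ℝ)
    (hMlo0 : Mlo 0 = 0)
    (hMhi : ∀ n, Mhi n = (asup - χ * μ * Mlo n) / (binf - χ * μ))
    (hMlo : ∀ n, Mlo (n + 1) = (ainf - χ * μ * Mhi n) / (bsup - χ * μ)) :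
    Filter.Tendsto Mlo Filter.atTop (nhds
      (((binf - χ * μ) * ainf - χ * μ * asup) /
        ((bsup - χ * μ) * (binf - χ * μ) - (χ * μ) ^ 2))) ∧
    Filter.Tendsto Mhi Filter.atTop (nhds
      (((bsup - χ * μ) * asup - χ * μ * ainf) /
        ((bsup - χ * μ) * (binf - χ * μ) - (χ * μ) ^ 2))) := by
  set k := χ * μ with hkdef
  have hk : 0 < k := mul_pos hχ hμ
  have hratio : 1 ≤ asup / ainf := (one_le_div hainf).2 ha
  have hH2' : binf > (1 + asup / ainf) * k := by rw [hkdef]; nlinarith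
  have hbinfk : k < binf - k := by nlinarith
  have hbsupk : k < bsup - k := lt_of_lt_of_le hbinfk (by linarith)
  have hbinf0 : (0:ℝ) < binf - k := lt_trans hk hbinfk
  have hbsup0 : (0:ℝ) < bsup - k := lt_trans hk hbsupk
  have hP : 0 < (bsup - k) * (binf - k) := mul_pos hbsup0 hbinf0
  have hD : 0 < (bsup - k) * (binf - k) - k ^ 2 := by nlinarith
  set r := k ^ 2 / ((bsup - k) * (binf - k)) with hrdef
  have hr0 : 0 ≤ r := div_nonneg (by positivity) hP.le
  have hr1 : r < 1 := (div_lt_one hP).2 (by nlinarith)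
  set L := ((binf - k) * ainf - k * asup) / ((bsup - k) * (binf - k) - k ^ 2) with hLdef
  have hstep : ∀ n, Mlo (n + 1) - L = r * (Mlo n - L) := by
    intro n
    rw [hMlo n, hMhi n, hLdef, hrdef]
    have hDne := hD.ne'
    set D := (bsup - k) * (binf - k) - k ^ 2 with hDdef
    field_simp
    rw [hDdef]
    ring
  have hform : ∀ n, Mlo n = L + r ^ n * (0 - L) := by
    intro n
    induction n with
    | zero => simp [hMlo0]
    | succ m ih =>
      have := hstep m
      rw [ih] at this
      rw [pow_succ]
      linarith [this]
  have hrlim : Filter.Tendsto (fun n => r ^ n) Filter.atTop (nhds 0) :=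
    tendsto_pow_atTop_nhds_zero_of_lt_one hr0 hr1
  have hMloTendsto : Filter.Tendsto Mlo Filter.atTop (nhds L) := by
    have : Filter.Tendsto (fun n => L + r ^ n * (0 - L)) Filter.atTop (nhds (L + 0 * (0 - L))) :=
      (tendsto_const_nhds.add (hrlim.mul tendsto_const_nhds))
    simpa [hform] using this.congr (fun n => (hform n).symm)
  refine ⟨hMloTendsto, ?_⟩
  have hMhiTendsto : Filter.Tendsto Mhi Filter.atTop (nhds ((asup - k * L) / (binf - k))) := by
    have : Filter.Tendsto (fun n => (asup - k * Mlo n) / (binf - k)) Filter.atTop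
        (nhds ((asup - k * L) / (binf - k))) :=
      ((tendsto_const_nhds.sub (hMloTendsto.const_mul k)).div_const _)
    exact this.congr (fun n => (hMhi n).symm)
  have heq : (asup - k * L) / (binf - k) =
      ((bsup - k) * asup - k * ainf) / ((bsup - k) * (binf - k) - k ^ 2) := by
    rw [hLdef]
    have hDne := hD.ne'
    set D := (bsup - k) * (binf - k) - k ^ 2 with hDdef
    field_simp
    rw [hDdef]
    ring
  rwa [heq] at hMhiTendsto
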